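/- If a finite Wang set T admits a periodic tiling of the plane, then T admits a doubly periodic tiling: there exist a tiling f of ℤ² by T and positive integers h and v such that f(x+h, y) = f(x, y) and f(x, y+v) = f(x, y) for all (x, y) ∈ ℤ². -/

import Mathlib

structure WangTile (H V : Type*) where
  west : H
  east : H
  south : V
  north : V
deriving DecidableEq

def TilingOn {H V : Type*} (T : Set (WangTile H V)) (X : Set (ℤ × ℤ))
    (f : ℤ × ℤ → WangTile H V) : Prop :=
  (∀ p ∈ X, f p ∈ T) ∧
  (∀ x y : ℤ, (x, y) ∈ X → (x + 1, y) ∈ X →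
    (f (x, y)).east = (f (x + 1, y)).west) ∧
  (∀ x y : ℤ, (x, y) ∈ X → (x, y + 1) ∈ X →
    (f (x, y)).north = (f (x, y + 1)).south)

def Tiling {H V : Type*} (T : Set (WangTile H V)) (f : ℤ × ℤ → WangTile H V) : Prop :=
  TilingOn T Set.univ f

def TilesPlane {H V : Type*} (T : Set (WangTile H V)) : Prop :=
  ∃ f, Tiling T f

def PeriodicTiling {H V : Type*} (f : ℤ × ℤ → WangTile H V) : Prop :=
  ∃ u v : ℤ, (u, v) ≠ (0, 0) ∧ ∀ x y : ℤ, f (x + u, y + v) = f (x, y)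

def Aperiodic {H V : Type*} (T : Set (WangTile H V)) : Prop :=
  TilesPlane T ∧ ∀ f, Tiling T f → ¬ PeriodicTiling f

def MinimallyAperiodic {H V : Type*} (T : Set (WangTile H V)) : Prop :=
  Aperiodic T ∧ ∀ S : Set (WangTile H V), S ⊂ T → ¬ TilesPlane S

lemma emod_congr {w a b : ℤ} (h : w ∣ (a - b)) : a % w = b % w :=
  (Int.modEq_iff_dvd.mpr (by exact h)).symm

lemma dvd_emod_sub {w s : ℤ} : w ∣ s % w - s := by
  have h := (Int.dvd_self_sub_of_emod_eq (rfl : s % w = s % w)).neg_right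
  rwa [neg_sub] at h

lemma divmod_eq {y v q r : ℤ} (hv : 0 < v) (h : y = q * v + r) (h0 : 0 ≤ r) (h1 : r < v) :
    y / v = q ∧ y % v = r := by
  have hm : y % v = r := by
    rw [show y = r + v * q by linarith, Int.add_mul_emod_self_left]
    exact Int.emod_eq_of_lt h0 h1
  refine ⟨?_, hm⟩
  have h2 := Int.emod_add_mul_ediv y v
  have h3 : v * (y / v) = v * q := by rw [hm] at h2; linarith [mul_comm v q]
  exact mul_left_cancel₀ (by omega) h3

lemma periodic_ext {α : Type*} (g : ℤ → α) (x1 w P : ℤ) (hw : 0 < w)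
    (h : ∀ z, x1 - P ≤ z → z ≤ x1 + P → g z = g (z + w)) :
    ∀ z, x1 - P ≤ z → z < x1 + w + P → g z = g (x1 + (z - x1) % w) := by
  have aux_up : ∀ k : ℕ, ∀ z, x1 - P ≤ z → z + (k : ℤ) * w < x1 + w → g z = g (z + (k:ℤ) * w) := by
    intro k
    induction k with
    | zero => intro z _ _; simp
    | succ n ih =>
      intro z hz1 hz2
      push_cast at hz2 ⊢
      have he : ((n:ℤ) + 1) * w = (n:ℤ) * w + w := by ring
      have hn : (0:ℤ) ≤ (n:ℤ) * w := by positivity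
      have hlt : z + (n:ℤ) * w < x1 := by linarith
      have h1 : g z = g (z + (n:ℤ) * w) := ih z hz1 (by linarith)
      have h2 : g (z + (n:ℤ) * w) = g (z + (n:ℤ) * w + w) :=
        h _ (by linarith) (by linarith)
      rw [h1, h2]; congr 1; ring
  have aux_down : ∀ k : ℕ, ∀ z, z < x1 + w + P → x1 ≤ z - (k:ℤ) * w → g z = g (z - (k:ℤ) * w) := by
    intro k
    induction k with
    | zero => intro z _ _; simp
    | succ n ih =>
      intro z hz1 hz2
      push_cast at hz2 ⊢
      have he : ((n:ℤ) + 1) * w = (n:ℤ) * w + w := by ring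
      have hn : (0:ℤ) ≤ (n:ℤ) * w := by positivity
      have hge : x1 + w ≤ z - (n:ℤ) * w := by linarith
      have h1 : g z = g (z - (n:ℤ) * w) := ih z hz1 (by linarith)
      have h2 : g (z - ((n:ℤ)+1) * w) = g (z - ((n:ℤ)+1) * w + w) :=
        h _ (by linarith) (by linarith)
      rw [h1, show z - (n:ℤ)*w = z - ((n:ℤ)+1)*w + w by ring, ← h2]
  intro z hz1 hz2
  have hm0 : 0 ≤ (z - x1) % w := Int.emod_nonneg _ (by omega)
  have hmw : (z - x1) % w < w := Int.emod_lt_of_pos _ hw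
  have hzq : z - x1 = w * ((z - x1) / w) + (z - x1) % w := (Int.mul_ediv_add_emod _ _).symm
  set m := (z - x1) % w
  set q := (z - x1) / w
  have hwq : w * q = q * w := mul_comm _ _
  rcases le_or_gt 0 q with hq0 | hq0
  · have hc : ((q.toNat : ℤ)) = q := Int.toNat_of_nonneg hq0
    have := aux_down q.toNat z hz2 (by rw [hc]; linarith)
    rw [this]; congr 1; rw [hc]; linarith
  · have hc : ((-q).toNat : ℤ) = -q := Int.toNat_of_nonneg (by omega)
    have := aux_up (-q).toNat z hz1 (by rw [hc]; nlinarith)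
    rw [this]; congr 1; rw [hc]; linarith [mul_comm (-q) w]

lemma key_lemma {H V : Type*} (T : Set (WangTile H V)) (hT : T.Finite)
    (f : ℤ × ℤ → WangTile H V) (hf : Tiling T f) (u v : ℤ) (hv : 0 < v)
    (hper : ∀ x y : ℤ, f (x + u, y + v) = f (x, y)) :
    ∃ (f' : ℤ × ℤ → WangTile H V) (h vv : ℤ), Tiling T f' ∧ 0 < h ∧ 0 < vv ∧
      (∀ x y : ℤ, f' (x + h, y) = f' (x, y)) ∧
      (∀ x y : ℤ, f' (x, y + vv) = f' (x, y)) := by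
  obtain ⟨hmem, hhor, hver⟩ := hf
  have hmem' : ∀ p, f p ∈ T := fun p => hmem p (Set.mem_univ p)
  have hhor' : ∀ x y : ℤ, (f (x, y)).east = (f (x + 1, y)).west :=
    fun x y => hhor x y (Set.mem_univ _) (Set.mem_univ _)
  have hver' : ∀ x y : ℤ, (f (x, y)).north = (f (x, y + 1)).south :=
    fun x y => hver x y (Set.mem_univ _) (Set.mem_univ _)
  -- window parameters
  set Pn : ℕ := u.natAbs + 1 with hPn
  set P : ℤ := (Pn : ℤ) with hP
  have hP1 : 1 ≤ P := by rw [hP, hPn]; omega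
  have hPu : u ≤ P - 1 ∧ -(P - 1) ≤ u := by
    constructor <;> (rw [hP, hPn]; omega)
  set vN : ℕ := v.toNat with hvN
  have hvNv : (vN : ℤ) = v := by simp [hvN]; omega
  -- pigeonhole
  have : ∃ n1 n2 : ℕ, n1 < n2 ∧
      (fun (n : ℕ) (i : Fin (2*Pn+1)) (j : Fin vN) =>
        (⟨f ((n:ℤ) - P + (i:ℤ), ((j:ℕ):ℤ)), hT.mem_toFinset.mpr (hmem' _)⟩ : hT.toFinset)) n1 =
      (fun (n : ℕ) (i : Fin (2*Pn+1)) (j : Fin vN) =>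
        (⟨f ((n:ℤ) - P + (i:ℤ), ((j:ℕ):ℤ)), hT.mem_toFinset.mpr (hmem' _)⟩ : hT.toFinset)) n2 := by
    obtain ⟨n1, n2, hne, heq⟩ := Finite.exists_ne_map_eq_of_infinite
      (fun (n : ℕ) (i : Fin (2*Pn+1)) (j : Fin vN) =>
        (⟨f ((n:ℤ) - P + (i:ℤ), ((j:ℕ):ℤ)), hT.mem_toFinset.mpr (hmem' _)⟩ : hT.toFinset))
    rcases Nat.lt_or_ge n1 n2 with h | h
    · exact ⟨n1, n2, h, heq⟩
    · exact ⟨n2, n1, by omega, heq.symm⟩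
  obtain ⟨n1, n2, hlt, heq⟩ := this
  set x1 : ℤ := (n1 : ℤ) with hx1
  set w : ℤ := (n2 : ℤ) - (n1 : ℤ) with hww
  have hw : 0 < w := by simp [hww]; exact_mod_cast hlt
  -- strip equality from the pigeonhole
  have L1 : ∀ z r : ℤ, x1 - P ≤ z → z ≤ x1 + P → 0 ≤ r → r < v →
      f (z, r) = f (z + w, r) := by
    intro z r hz1 hz2 hr0 hrv
    have hi : (z - x1 + P).toNat < 2*Pn + 1 := by omega
    have hj : r.toNat < vN := by omega
    have := congrFun (congrFun heq ⟨(z - x1 + P).toNat, hi⟩) ⟨r.toNat, hj⟩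
    have h2 := congrArg Subtype.val this
    simp only at h2
    have e1 : (n1:ℤ) - P + ((z - x1 + P).toNat : ℤ) = z := by omega
    have e2 : ((r.toNat : ℕ) : ℤ) = r := by omega
    have e3 : (n2:ℤ) - P + ((z - x1 + P).toNat : ℤ) = z + w := by omega
    rwa [e1, e2, e3] at h2
  have E : ∀ z r : ℤ, x1 - P ≤ z → z < x1 + w + P → 0 ≤ r → r < v →
      f (z, r) = f (x1 + (z - x1) % w, r) := by
    intro z r hz1 hz2 hr0 hrv
    exact periodic_ext (fun z => f (z, r)) x1 w P hw
      (fun z h1 h2 => L1 z r h1 h2 hr0 hrv) z hz1 hz2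
  -- iterated period
  have fperk : ∀ k : ℤ, ∀ x y : ℤ, f (x + k*u, y + k*v) = f (x, y) := by
    intro k
    induction k using Int.induction_on with
    | zero => intro x y; norm_num
    | succ n ih =>
      intro x y
      have h1 := hper (x + (n:ℤ)*u) (y + (n:ℤ)*v)
      have e : ((x + ((n:ℤ)+1)*u, y + ((n:ℤ)+1)*v) : ℤ×ℤ) =
          (x + (n:ℤ)*u + u, y + (n:ℤ)*v + v) := by
        simp only [Prod.mk.injEq]; constructor <;> ring
      rw [e, h1]; exact ih x y
    | pred n ih =>
      intro x y
      have h1 := hper (x + (-(n:ℤ)-1)*u) (y + (-(n:ℤ)-1)*v)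
      have ihxy := ih x y
      have e : ((x + (-(n:ℤ))*u, y + (-(n:ℤ))*v) : ℤ×ℤ) =
          (x + (-(n:ℤ)-1)*u + u, y + (-(n:ℤ)-1)*v + v) := by
        simp only [Prod.mk.injEq]; constructor <;> ring
      rw [e, h1] at ihxy
      exact ihxy
  -- the doubly periodic tiling
  refine ⟨fun p => f (x1 + (p.1 - (p.2 / v) * u - x1) % w, p.2 % v), w, v * w,
    ⟨?_, ?_, ?_⟩, hw, by positivity, ?_, ?_⟩
  · intro p _; exact hmem' _
  · -- horizontal matching
    intro x y _ _
    simp only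
    set q := y / v with hq
    set r := y % v with hr
    have hr0 : 0 ≤ r := Int.emod_nonneg _ (by omega)
    have hrv : r < v := Int.emod_lt_of_pos _ hv
    set a := x1 + (x - q * u - x1) % w with ha
    have ha1 : x1 ≤ a := by
      have := Int.emod_nonneg (x - q * u - x1) (show w ≠ 0 by omega); omega
    have ha2 : a < x1 + w := by
      have := Int.emod_lt_of_pos (x - q * u - x1) hw; omega
    have hstep : x1 + (x + 1 - q * u - x1) % w = x1 + (a + 1 - x1) % w := by
      have : w ∣ (x + 1 - q * u - x1) - (a + 1 - x1) := by
        rw [show (x + 1 - q * u - x1) - (a + 1 - x1) =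
          (x - q*u - x1) - (x - q*u - x1) % w by rw [ha]; ring]
        exact Int.dvd_self_sub_of_emod_eq rfl
      rw [emod_congr this]
    rw [hstep]
    have hE := E (a + 1) r (by omega) (by omega) hr0 hrv
    rw [show a + 1 - x1 = (a+1) - x1 by ring] at hE ⊢
    rw [← hE]
    exact hhor' a r
  · -- vertical matching
    intro x y _ _
    simp only
    set q := y / v with hq
    set r := y % v with hr
    have hr0 : 0 ≤ r := Int.emod_nonneg _ (by omega)
    have hrv : r < v := Int.emod_lt_of_pos _ hv
    have hy : y = q * v + r := by
      have := Int.mul_ediv_add_emod y v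
      rw [hq, hr]; linarith [mul_comm v (y/v)]
    set a := x1 + (x - q * u - x1) % w with ha
    have ha1 : x1 ≤ a := by
      have := Int.emod_nonneg (x - q * u - x1) (show w ≠ 0 by omega); omega
    have ha2 : a < x1 + w := by
      have := Int.emod_lt_of_pos (x - q * u - x1) hw; omega
    rcases lt_or_eq_of_le (by omega : r + 1 ≤ v) with hcase | hcase
    · -- interior of the strip
      have hdm := divmod_eq hv (show y + 1 = q * v + (r+1) by omega) (by omega) hcase
      rw [hdm.1, hdm.2]
      exact hver' a r
    · -- crossing the strip boundary
      have hdm := divmod_eq hv (show y + 1 = (q+1) * v + 0 by push_cast; linarith) le_rfl hv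
      rw [hdm.1, hdm.2]
      set a' := x1 + (x - (q+1) * u - x1) % w with ha'
      have step1 : (f (a, r)).north = (f (a, r+1)).south := hver' a r
      have step2 : f (a, r + 1) = f (a - u, 0) := by
        have := fperk 1 (a - u) 0
        rw [show a - u + 1*u = a by ring, show (0:ℤ) + 1*v = v by ring] at this
        rw [show r + 1 = v by omega, this]
      have step3 : f (a - u, 0) = f (a', 0) := by
        have hdv : w ∣ (a - u - x1) - (x - (q+1) * u - x1) := by
          rw [show (a - u - x1) - (x - (q+1) * u - x1) =
            (x - q*u - x1) % w - (x - q*u - x1) by rw [ha]; ring]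
          exact dvd_emod_sub
        have hE := E (a - u) 0 (by omega) (by omega) le_rfl hv
        rw [hE, ha', emod_congr hdv]
      rw [step1, step2, step3]
  · -- horizontal period
    intro x y
    simp only
    have : w ∣ (x + w - (y/v) * u - x1) - (x - (y/v) * u - x1) := ⟨1, by ring⟩
    rw [emod_congr this]
  · -- vertical period
    intro x y
    simp only
    have hy : y = (y/v) * v + y % v := by
      have := Int.mul_ediv_add_emod y v; linarith [mul_comm v (y/v)]
    have hdm := divmod_eq hv (show y + v*w = (y/v + w) * v + y % v by linarith [mul_comm v w, mul_comm (y/v) v])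
      (Int.emod_nonneg _ (by omega)) (Int.emod_lt_of_pos _ hv)
    rw [hdm.1, hdm.2]
    have : w ∣ (x - (y/v + w) * u - x1) - (x - (y/v) * u - x1) := ⟨-u, by ring⟩
    rw [emod_congr this]
def trT {H V : Type*} : WangTile H V → WangTile V H :=
  fun t => ⟨t.south, t.north, t.west, t.east⟩

/-- If a finite Wang set `T` admits a periodic tiling of the plane, then it
admits a doubly periodic tiling, with a horizontal period `h > 0` and a vertical period
`v > 0`. -/
theorem doubly_periodic_of_periodic {H V : Type*} (T : Set (WangTile H V))
    (hT : T.Finite) (f : ℤ × ℤ → WangTile H V) (hf : Tiling T f)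
    (hper : PeriodicTiling f) :
    ∃ (f' : ℤ × ℤ → WangTile H V) (h v : ℤ), Tiling T f' ∧ 0 < h ∧ 0 < v ∧
      (∀ x y : ℤ, f' (x + h, y) = f' (x, y)) ∧
      (∀ x y : ℤ, f' (x, y + v) = f' (x, y)) := by
  obtain ⟨u, v, hne, hp⟩ := hper
  have hneg : ∀ (u v : ℤ), (∀ x y : ℤ, f (x + u, y + v) = f (x, y)) →
      ∀ x y : ℤ, f (x + -u, y + -v) = f (x, y) := by
    intro u v hp x y
    have := hp (x + -u) (y + -v)
    rw [show x + -u + u = x by ring, show y + -v + v = y by ring] at this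
    exact this.symm
  rcases lt_trichotomy v 0 with hv | hv | hv
  · exact key_lemma T hT f hf (-u) (-v) (by omega) (hneg u v hp)
  · -- v = 0 : transpose
    subst hv
    have hu : ∃ u' : ℤ, 0 < u' ∧ ∀ x y : ℤ, f (x + u', y) = f (x, y) := by
      rcases lt_trichotomy u 0 with hu0 | hu0 | hu0
      · refine ⟨-u, by omega, fun x y => ?_⟩
        have := hneg u 0 hp x y; rwa [show y + -0 = y by ring] at this
      · exact absurd (by rw [hu0]) hne
      · refine ⟨u, hu0, fun x y => ?_⟩
        have := hp x y; rwa [show y + 0 = y by ring] at this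
    obtain ⟨u', hu'pos, hp'⟩ := hu
    obtain ⟨hmem, hhor, hver⟩ := hf
    set g : ℤ × ℤ → WangTile V H := fun p => trT (f (p.2, p.1)) with hg
    have hgt : Tiling (trT '' T) g := by
      refine ⟨fun p _ => ⟨f (p.2, p.1), hmem _ (Set.mem_univ _), rfl⟩, ?_, ?_⟩
      · intro x y _ _
        exact hver y x (Set.mem_univ _) (Set.mem_univ _)
      · intro x y _ _
        exact hhor y x (Set.mem_univ _) (Set.mem_univ _)
    have hpg : ∀ x y : ℤ, g (x + 0, y + u') = g (x, y) := by
      intro x y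
      simp only [hg]
      rw [show x + 0 = x by ring]
      exact congrArg trT (hp' y x)
    obtain ⟨g', h, vv, ⟨hgmem, hghor, hgver⟩, hh, hvv, hper1, hper2⟩ :=
      key_lemma (trT '' T) (hT.image trT) g hgt 0 u' hu'pos hpg
    refine ⟨fun p => trT (g' (p.2, p.1)), vv, h, ⟨?_, ?_, ?_⟩, hvv, hh, ?_, ?_⟩
    · intro p _
      obtain ⟨t, ht, htt⟩ := hgmem (p.2, p.1) (Set.mem_univ _)
      show trT (g' (p.2, p.1)) ∈ T
      rw [← htt]
      show t ∈ T
      exact ht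
    · intro x y _ _
      exact hgver y x (Set.mem_univ _) (Set.mem_univ _)
    · intro x y _ _
      exact hghor y x (Set.mem_univ _) (Set.mem_univ _)
    · intro x y
      exact congrArg trT (hper2 y x)
    · intro x y
      exact congrArg trT (hper1 y x)
  · exact key_lemma T hT f hf u v hv hp
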